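/- Suppose in addition to the hypotheses of the basic commutator inequality that there is a further term: (1/2i)(B²(P − iQ) − (P* + iQ)B²) = −(G₁*G₁ + G₂*G₂) − BQB + E + F with Q = Q* positive semidefinite and B = B*. Then ⟨Bu, QBu⟩ ≥ 0 and hence ‖G₁u‖² + (1 − c/2)‖G₂u‖² + ⟨Bu, QBu⟩ ≤ (1/(2c))‖H(P−iQ)u‖² + |Im⟨u, J(P−iQ)u⟩| + |⟨u, Eu⟩| + |⟨u, Fu⟩|, for 0 < c < 2, where B² = G₂H + J; in particular the left-hand side terms are individually bounded by the right-hand side. -/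

import Mathlib

open ContinuousLinearMap

/-- The key estimate for the τ-family theorem: if
`(1/2i)(B²(P − iQ) − (P* + iQ)B²) = −(G₁*G₁ + G₂*G₂) − BQB + E + F` with `Q = Q*`
positive semidefinite, `B = B*`, `G₂ = G₂*`, and `B² = G₂H + J`, then `⟨Bu, QBu⟩ ≥ 0` and
`‖G₁u‖² + (1 − c/2)‖G₂u‖² + ⟨Bu, QBu⟩ ≤ (1/(2c))‖H(P−iQ)u‖² + |Im⟨u, J(P−iQ)u⟩|
+ |⟨u, Eu⟩| + |⟨u, Fu⟩|` for `0 < c < 2`. -/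
theorem tau_commutator_inequality {H : Type*} [NormedAddCommGroup H]
    [InnerProductSpace ℂ H] [CompleteSpace H]
    (B P Q G₁ G₂ E F Hop J : H →L[ℂ] H)
    (hQ : adjoint Q = Q)
    (hQpos : ∀ v : H, 0 ≤ (inner ℂ v (Q v) : ℂ).re)
    (hB : adjoint B = B) (hG₂ : adjoint G₂ = G₂)
    (hid : (1 / (2 * Complex.I)) •
          (B ∘L B ∘L (P - Complex.I • Q) - (adjoint P + Complex.I • Q) ∘L B ∘L B)
        = -(adjoint G₁ ∘L G₁ + adjoint G₂ ∘L G₂) - B ∘L Q ∘L B + E + F)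
    (hfact : B ∘L B = G₂ ∘L Hop + J) :
    ∀ c : ℝ, 0 < c → c < 2 → ∀ u : H,
      0 ≤ (inner ℂ (B u) (Q (B u)) : ℂ).re ∧
      ‖G₁ u‖ ^ 2 + (1 - c / 2) * ‖G₂ u‖ ^ 2 + (inner ℂ (B u) (Q (B u)) : ℂ).re
        ≤ (1 / (2 * c)) * ‖Hop ((P - Complex.I • Q) u)‖ ^ 2
          + |(inner ℂ u (J ((P - Complex.I • Q) u)) : ℂ).im|
          + ‖(inner ℂ u (E u) : ℂ)‖
          + ‖(inner ℂ u (F u) : ℂ)‖ := by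
  intro c hc hc2 u
  refine ⟨hQpos (B u), ?_⟩
  set T : H →L[ℂ] H := P - Complex.I • Q with hT
  -- adjoint of T
  have hTadj : adjoint T = adjoint P + Complex.I • Q := by
    rw [hT, map_sub,
      show adjoint (Complex.I • Q) = (starRingEnd ℂ) Complex.I • adjoint Q from
        LinearIsometryEquiv.map_smulₛₗ adjoint Complex.I Q,
      hQ, Complex.conj_I, sub_eq_add_neg, neg_smul, neg_neg]
  -- pair the identity with u
  have key := congrArg (fun A : H →L[ℂ] H => (inner ℂ u (A u) : ℂ)) hid
  simp only [smul_apply, sub_apply, add_apply, neg_apply, comp_apply,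
    inner_smul_right, inner_sub_right, inner_add_right, inner_neg_right] at key
  -- z := ⟨u, B² T u⟩
  set z : ℂ := inner ℂ u (B (B (T u))) with hz
  have h1 : (inner ℂ u ((adjoint P + Complex.I • Q) (B (B u))) : ℂ) = (starRingEnd ℂ) z := by
    rw [← hTadj, adjoint_inner_right, hz]
    have : (inner ℂ (T u) (B (B u)) : ℂ) = inner ℂ (B (B (T u))) u := by
      rw [← adjoint_inner_right B, hB, ← adjoint_inner_right B, hB]
    rw [this, ← inner_conj_symm]
  have h1' : (inner ℂ u ((adjoint P) (B (B u))) : ℂ) + Complex.I * inner ℂ u (Q (B (B u)))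
      = (starRingEnd ℂ) z := by
    rw [← inner_smul_right, ← inner_add_right]
    simpa [inner_add_right, inner_smul_right] using h1
  rw [h1'] at key
  have hzim : 1 / (2 * Complex.I) * (z - (starRingEnd ℂ) z) = (z.im : ℂ) := by
    rw [Complex.sub_conj]
    field_simp
    push_cast
    ring
  rw [hzim] at key
  -- right side real parts
  have hG1 : (inner ℂ u ((adjoint G₁) (G₁ u)) : ℂ) = (‖G₁ u‖ : ℂ) ^ 2 := by
    rw [adjoint_inner_right, inner_self_eq_norm_sq_to_K]
    norm_cast
  have hG2 : (inner ℂ u ((adjoint G₂) (G₂ u)) : ℂ) = (‖G₂ u‖ : ℂ) ^ 2 := by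
    rw [adjoint_inner_right, inner_self_eq_norm_sq_to_K]
    norm_cast
  have hBQB : (inner ℂ u (B (Q (B u))) : ℂ) = inner ℂ (B u) (Q (B u)) := by
    rw [← adjoint_inner_left, hB]
  rw [hG1, hG2, hBQB] at key
  -- take real parts
  have hre := congrArg Complex.re key
  simp only [Complex.add_re, Complex.sub_re, Complex.neg_re, ← Complex.ofReal_pow,
    Complex.ofReal_re] at hre
  -- decompose z via hfact
  have hzdec : z = inner ℂ (G₂ u) (Hop (T u)) + inner ℂ u (J (T u)) := by
    have : B (B (T u)) = G₂ (Hop (T u)) + J (T u) := by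
      have := congrArg (fun A : H →L[ℂ] H => A (T u)) hfact
      simpa using this
    rw [hz, this, inner_add_right, ← adjoint_inner_left, hG₂]
  -- bounds
  set a := ‖G₂ u‖
  set b := ‖Hop (T u)‖
  have hb1 : -(inner ℂ (G₂ u) (Hop (T u)) : ℂ).im ≤ c / 2 * a ^ 2 + 1 / (2 * c) * b ^ 2 := by
    have h1 : -(inner ℂ (G₂ u) (Hop (T u)) : ℂ).im ≤ a * b := by
      calc -(inner ℂ (G₂ u) (Hop (T u)) : ℂ).im ≤ |(inner ℂ (G₂ u) (Hop (T u)) : ℂ).im| :=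
            neg_le_abs _
        _ ≤ ‖(inner ℂ (G₂ u) (Hop (T u)) : ℂ)‖ := Complex.abs_im_le_norm _
        _ = ‖(inner ℂ (G₂ u) (Hop (T u)) : ℂ)‖ := rfl
        _ ≤ a * b := norm_inner_le_norm _ _
    have h2 : a * b ≤ c / 2 * a ^ 2 + 1 / (2 * c) * b ^ 2 := by
      rw [div_mul_eq_mul_div, one_div, ← sub_nonneg]
      have h := sq_nonneg (c * a - b)
      have hc' : (0:ℝ) < 2 * c := by linarith
      have : c * a ^ 2 / 2 + (2 * c)⁻¹ * b ^ 2 - a * b = (c * a - b) ^ 2 / (2 * c) := by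
        field_simp
        ring
      rw [this]
      positivity
    linarith
  have hb2 : -(inner ℂ u (J (T u)) : ℂ).im ≤ |(inner ℂ u (J (T u)) : ℂ).im| := neg_le_abs _
  have hb3 : (inner ℂ u (E u) : ℂ).re ≤ ‖(inner ℂ u (E u) : ℂ)‖ := Complex.re_le_norm _
  have hb4 : (inner ℂ u (F u) : ℂ).re ≤ ‖(inner ℂ u (F u) : ℂ)‖ := Complex.re_le_norm _
  have himz : z.im = (inner ℂ (G₂ u) (Hop (T u)) : ℂ).im + (inner ℂ u (J (T u)) : ℂ).im := by
    rw [hzdec, Complex.add_im]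
  -- conclude
  have : ‖G₁ u‖ ^ 2 + a ^ 2 + (inner ℂ (B u) (Q (B u)) : ℂ).re
      = -z.im + (inner ℂ u (E u) : ℂ).re + (inner ℂ u (F u) : ℂ).re := by linarith [hre]
  rw [himz] at this
  linarith [this, hb1, hb2, hb3, hb4]
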